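/- Let d ≥ 1 and let F : ℝ^d → ℝ^d be continuous with sup_{y ∈ ℝ^d} ‖F(y) − y‖ < ∞. Then the (set-valued) inverse of F is outer semi-continuous: for every x ∈ ℝ^d and every ε > 0 there exists δ > 0 such that F⁻¹(B(x,δ)) ⊆ F⁻¹({x}) + B(0,ε), where F⁻¹(S) = {y : F(y) ∈ S}. -/
import Mathlib


open scoped Pointwise
noncomputable section

theorem stmt18 (d : ℕ) (hd : 1 ≤ d)
    (F : EuclideanSpace ℝ (Fin d) → EuclideanSpace ℝ (Fin d))
    (hF : Continuous F)
    (hbd : ∃ C : ℝ, ∀ y, ‖F y - y‖ ≤ C) :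
    ∀ x : EuclideanSpace ℝ (Fin d), ∀ ε : ℝ, 0 < ε →
      ∃ δ : ℝ, 0 < δ ∧
        F ⁻¹' (Metric.ball x δ) ⊆
          F ⁻¹' {x} + Metric.ball (0 : EuclideanSpace ℝ (Fin d)) ε := by
  intro x ε hε
  by_contra hcon
  push_neg at hcon
  obtain ⟨C, hC⟩ := hbd
  -- choose a sequence of counterexamples
  have hseq : ∀ n : ℕ, ∃ y, F y ∈ Metric.ball x (1 / (n + 1)) ∧
      y ∉ F ⁻¹' {x} + Metric.ball (0 : EuclideanSpace ℝ (Fin d)) ε := by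
    intro n
    have hy := hcon (1 / (n + 1)) (by positivity)
    rw [Set.not_subset] at hy
    obtain ⟨y, hy1, hy2⟩ := hy
    exact ⟨y, hy1, hy2⟩
  choose y hy1 hy2 using hseq
  -- the sequence is bounded
  have hbdd : ∀ n, y n ∈ Metric.closedBall (0 : EuclideanSpace ℝ (Fin d)) (‖x‖ + 1 + C) := by
    intro n
    have h1 : ‖F (y n) - x‖ < 1 := by
      have := hy1 n
      rw [Metric.mem_ball, dist_eq_norm] at this
      calc ‖F (y n) - x‖ < 1 / (n + 1) := this
        _ ≤ 1 := by
          rw [div_le_one (by positivity)]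
          linarith [Nat.cast_nonneg (α := ℝ) n]
    have h2 : ‖F (y n) - y n‖ ≤ C := hC _
    rw [Metric.mem_closedBall, dist_zero_right]
    have : y n = x + (F (y n) - x) - (F (y n) - y n) := by abel
    rw [this]
    calc ‖x + (F (y n) - x) - (F (y n) - y n)‖
        ≤ ‖x + (F (y n) - x)‖ + ‖F (y n) - y n‖ := norm_sub_le _ _
      _ ≤ ‖x‖ + ‖F (y n) - x‖ + ‖F (y n) - y n‖ := by
          linarith [norm_add_le x (F (y n) - x)]
      _ ≤ ‖x‖ + 1 + C := by linarith
  -- extract a convergent subsequence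
  obtain ⟨a, -, φ, hφ, hconv⟩ :=
    tendsto_subseq_of_bounded Metric.isBounded_closedBall hbdd
  -- F a = x
  have hFx : Filter.Tendsto (fun n => F (y (φ n))) Filter.atTop (nhds x) := by
    rw [Metric.tendsto_atTop]
    intro η hη
    obtain ⟨N, hN⟩ := exists_nat_one_div_lt hη
    refine ⟨N, fun n hn => ?_⟩
    have := hy1 (φ n)
    rw [Metric.mem_ball] at this
    have hφn : (N : ℝ) ≤ φ n := by
      exact_mod_cast le_trans hn (StrictMono.le_apply hφ)
    calc dist (F (y (φ n))) x < 1 / (φ n + 1) := this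
      _ ≤ 1 / (N + 1) := by
          apply one_div_le_one_div_of_le (by positivity)
          linarith
      _ < η := hN
  have hFa : F a = x :=
    tendsto_nhds_unique (hF.continuousAt.tendsto.comp hconv) hFx
  -- contradiction: eventually y (φ n) ∈ F⁻¹{x} + ball 0 ε
  rw [Metric.tendsto_atTop] at hconv
  obtain ⟨N, hN⟩ := hconv ε hε
  apply hy2 (φ N)
  rw [Set.mem_add]
  refine ⟨a, by simp [hFa], y (φ N) - a, ?_, by abel⟩
  rw [Metric.mem_ball, dist_zero_right]
  have := hN N le_rfl
  rwa [Function.comp_apply, dist_eq_norm] at this
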